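/- The locating chromatic number of K_3 □ K_4 equals 6, and the locating chromatic number of K_3 □ K_5 equals 6. -/

import Mathlib

open SimpleGraph

/-- The distance from a vertex to a set of vertices. -/
noncomputable def setDist {V : Type*} (G : SimpleGraph V) (v : V) (S : Set V) : ℕ :=
  sInf (G.dist v '' S)

/-- The color code of a vertex with respect to a `k`-coloring `c`:
the tuple of distances to the color classes. -/
noncomputable def colorCode {V : Type*} (G : SimpleGraph V) {k : ℕ} (c : V → Fin k)
    (v : V) : Fin k → ℕ :=
  fun i => setDist G v (c ⁻¹' {i})

/-- `c` is a locating `k`-coloring of `G`: a proper coloring onto the `k` colors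
such that distinct vertices have distinct color codes. -/
def IsLocatingColoring {V : Type*} (G : SimpleGraph V) {k : ℕ} (c : V → Fin k) : Prop :=
  Function.Surjective c ∧
  (∀ u v : V, G.Adj u v → c u ≠ c v) ∧
  Function.Injective (colorCode G c)

/-- The locating chromatic number: the least `k` admitting a locating `k`-coloring. -/
noncomputable def locatingChromaticNumber {V : Type*} (G : SimpleGraph V) : ℕ :=
  sInf {k : ℕ | ∃ c : V → Fin k, IsLocatingColoring G c}

/-- A vertex is colorful w.r.t. a coloring `c` if every color appears in its
closed neighborhood. -/
def IsColorful {V : Type*} (G : SimpleGraph V) {k : ℕ} (c : V → Fin k) (v : V) : Prop :=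
  ∀ i : Fin k, ∃ u : V, (u = v ∨ G.Adj v u) ∧ c u = i

/-! ### Auxiliary infrastructure -/

open Function

/-- The graph `K_3 □ K_n`. -/
abbrev Gr (n : ℕ) : SimpleGraph (Fin 3 × Fin n) :=
  (⊤ : SimpleGraph (Fin 3)) □ (⊤ : SimpleGraph (Fin n))

/-- Explicit (decidable) adjacency in `K_3 □ K_n`. -/
abbrev adjE {n : ℕ} (u v : Fin 3 × Fin n) : Prop :=
  (u.1 = v.1 ∧ u.2 ≠ v.2) ∨ (u.2 = v.2 ∧ u.1 ≠ v.1)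

lemma gr_adj {n : ℕ} (u v : Fin 3 × Fin n) : (Gr n).Adj u v ↔ adjE u v := by
  simp only [Gr, SimpleGraph.boxProd_adj, SimpleGraph.top_adj, adjE]
  tauto

lemma gr_dist {n : ℕ} (u v : Fin 3 × Fin n) :
    (Gr n).dist u v = if u = v then 0 else if adjE u v then 1 else 2 := by
  by_cases he : u = v
  · simp [he]
  rw [if_neg he]
  by_cases ha : adjE u v
  · rw [if_pos ha, SimpleGraph.dist_eq_one_iff_adj]
    exact (gr_adj u v).mpr ha
  rw [if_neg ha]
  have h1 : u.1 ≠ v.1 := by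
    intro h
    exact ha (Or.inl ⟨h, fun h2 => he (Prod.ext h h2)⟩)
  have h2 : u.2 ≠ v.2 := by
    intro h
    exact ha (Or.inr ⟨h, h1⟩)
  have hw1 : (Gr n).Adj u (u.1, v.2) := (gr_adj _ _).mpr (Or.inl ⟨rfl, h2⟩)
  have hw2 : (Gr n).Adj (u.1, v.2) v := (gr_adj _ _).mpr (Or.inr ⟨rfl, h1⟩)
  have hle : (Gr n).dist u v ≤ 2 := by
    have := SimpleGraph.dist_le (Walk.cons hw1 (Walk.cons hw2 Walk.nil))
    simpa using this
  have hr : (Gr n).Reachable u v := ⟨Walk.cons hw1 (Walk.cons hw2 Walk.nil)⟩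
  have h0 : (Gr n).dist u v ≠ 0 := fun h => he (hr.dist_eq_zero_iff.mp h)
  have hone : (Gr n).dist u v ≠ 1 := fun h =>
    ha ((gr_adj u v).mp (SimpleGraph.dist_eq_one_iff_adj.mp h))
  omega

/-- A decidable description of the color code in `K_3 □ K_n`. -/
def codeFun {n k : ℕ} (c : Fin 3 × Fin n → Fin k) (v : Fin 3 × Fin n) (i : Fin k) : ℕ :=
  if c v = i then 0 else if ∃ u, adjE v u ∧ c u = i then 1 else 2

set_option linter.unreachableTactic false in
set_option linter.unusedTactic false in
lemma code_eq {n k : ℕ} (c : Fin 3 × Fin n → Fin k) (hs : Surjective c) :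
    colorCode (Gr n) c = codeFun c := by
  funext v i
  unfold colorCode setDist codeFun
  by_cases hv : c v = i
  · rw [if_pos hv]
    exact Nat.sInf_eq_zero.mpr (Or.inl ⟨v, hv, SimpleGraph.dist_self⟩)
  rw [if_neg hv]
  have hne : ((Gr n).dist v '' (c ⁻¹' {i})).Nonempty := by
    obtain ⟨x, hx⟩ := hs i
    exact ⟨_, ⟨x, hx, rfl⟩⟩
  have h0 : 0 ∉ (Gr n).dist v '' (c ⁻¹' {i}) := by
    rintro ⟨x, hx, hdx⟩
    rw [gr_dist] at hdx
    split_ifs at hdx with h h'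
    · exact hv (h ▸ hx)
    all_goals omega
  by_cases hadj : ∃ u, adjE v u ∧ c u = i
  · rw [if_pos hadj]
    obtain ⟨u, hu, hcu⟩ := hadj
    have hd1 : (Gr n).dist v u = 1 := SimpleGraph.dist_eq_one_iff_adj.mpr ((gr_adj _ _).mpr hu)
    have hmem : 1 ∈ (Gr n).dist v '' (c ⁻¹' {i}) := ⟨u, hcu, hd1⟩
    have hle := Nat.sInf_le hmem
    have : sInf ((Gr n).dist v '' (c ⁻¹' {i})) ≠ 0 := by
      intro h
      rcases Nat.sInf_eq_zero.mp h with h' | h'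
      · exact h0 h'
      · exact hne.ne_empty h'
    omega
  · rw [if_neg hadj]
    have hall : ∀ m ∈ (Gr n).dist v '' (c ⁻¹' {i}), m = 2 := by
      rintro m ⟨x, hx, hdx⟩
      rw [gr_dist] at hdx
      split_ifs at hdx with h h'
      · exact absurd (h ▸ hx) hv
      · exact absurd ⟨x, h', hx⟩ hadj
      all_goals omega
    exact hall _ (Nat.sInf_mem hne)

lemma locating_iff {n k : ℕ} (c : Fin 3 × Fin n → Fin k) :
    IsLocatingColoring (Gr n) c ↔
      Surjective c ∧ (∀ u v, adjE u v → c u ≠ c v) ∧ Injective (codeFun c) := by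
  constructor
  · rintro ⟨hs, hp, hi⟩
    refine ⟨hs, fun u v h => hp u v ((gr_adj u v).mpr h), ?_⟩
    rwa [code_eq c hs] at hi
  · rintro ⟨hs, hp, hi⟩
    refine ⟨hs, fun u v h => hp u v ((gr_adj u v).mp h), ?_⟩
    rwa [code_eq c hs]

lemma relabel {V : Type*} (G : SimpleGraph V) {k : ℕ} (c : V → Fin k)
    (σ : Equiv.Perm (Fin k)) (h : IsLocatingColoring G c) :
    IsLocatingColoring G (⇑σ ∘ c) := by
  obtain ⟨hs, hp, hi⟩ := h
  have key : ∀ v i, colorCode G (⇑σ ∘ c) v i = colorCode G c v (σ.symm i) := by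
    intro v i
    unfold colorCode setDist
    congr 2
    ext x
    simp [Equiv.eq_symm_apply]
  refine ⟨σ.surjective.comp hs, fun u v ha hc => hp u v ha (σ.injective hc), ?_⟩
  intro u v huv
  apply hi
  funext i
  have := congrFun huv (σ i)
  rwa [key, key, Equiv.symm_apply_apply] at this

lemma exists_perm_comp {α β : Type*} [Fintype β] [DecidableEq β] (f g : α → β)
    (hf : Injective f) (hg : Injective g) :
    ∃ σ : Equiv.Perm β, ∀ a, σ (f a) = g a := by
  classical
  let e : {x // x ∈ Set.range f} ≃ {x // x ∈ Set.range g} :=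
    (Equiv.ofInjective f hf).symm.trans (Equiv.ofInjective g hg)
  refine ⟨e.extendSubtype, fun a => ?_⟩
  have h1 : f a ∈ Set.range f := ⟨a, rfl⟩
  rw [e.extendSubtype_apply_of_mem _ h1]
  have h2 : (⟨f a, h1⟩ : {x // x ∈ Set.range f}) = Equiv.ofInjective f hf a := rfl
  show (e ⟨f a, h1⟩ : β) = g a
  rw [h2]
  simp [e]

lemma row_inj {n k : ℕ} (c : Fin 3 × Fin n → Fin k)
    (hp : ∀ u v, adjE u v → c u ≠ c v) (a : Fin 3) :
    Injective (fun b => c (a, b)) := by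
  intro b b' h
  by_contra hne
  exact hp (a, b) (a, b') (Or.inl ⟨rfl, by simpa using hne⟩) h

/-- Pigeonhole: with exactly `n` colors on `K_3 □ K_n`, every row is rainbow, so color
codes are determined by the color alone; with `3n > n` vertices this cannot be injective. -/
lemma pigeon {n : ℕ} (hn : 0 < n) (c : Fin 3 × Fin n → Fin n)
    (hp : ∀ u v, adjE u v → c u ≠ c v) : ¬ Injective (codeFun c) := by
  intro hinj
  have hrow : ∀ a : Fin 3, Surjective (fun b => c (a, b)) := fun a =>
    Finite.injective_iff_surjective.mp (row_inj c hp a)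
  obtain ⟨v, w, hvw, hcc⟩ := Fintype.exists_ne_map_eq_of_card_lt c
    (by simp [Fintype.card_prod]; omega)
  apply hvw
  apply hinj
  funext i
  unfold codeFun
  have hex : ∀ x : Fin 3 × Fin n, c x ≠ i → ∃ u, adjE x u ∧ c u = i := by
    intro x hx
    obtain ⟨b', hb'⟩ := hrow x.1 i
    refine ⟨(x.1, b'), Or.inl ⟨rfl, ?_⟩, hb'⟩
    intro h
    apply hx
    rw [show x = (x.1, b') from Prod.ext rfl h]
    exact hb'
  by_cases hi : c v = i
  · rw [if_pos hi, if_pos (by rw [← hcc]; exact hi)]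
  · rw [if_neg hi, if_neg (show ¬ c w = i by rw [← hcc]; exact hi)]
    rw [if_pos (hex v hi), if_pos (hex w (by rw [← hcc]; exact hi))]

/-! ### Fast verification machinery for `K_3 □ K_4` with 5 colors -/

def B4 {k : ℕ} (c : Fin 3 × Fin 4 → Fin k) (v : Fin 3 × Fin 4) (i : Fin k) : Bool :=
  c (v.1, v.2+1) == i || c (v.1, v.2+2) == i || c (v.1, v.2+3) == i ||
  c (v.1+1, v.2) == i || c (v.1+2, v.2) == i

def codeN4 (c : Fin 3 × Fin 4 → Fin 5) (v : Fin 3 × Fin 4) : ℕ :=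
  32 * (c v).val + (B4 c v 0).toNat + 2*(B4 c v 1).toNat + 4*(B4 c v 2).toNat
    + 8*(B4 c v 3).toNat + 16*(B4 c v 4).toNat

def verts4 : List (Fin 3 × Fin 4) :=
  [(0,0),(0,1),(0,2),(0,3),(1,0),(1,1),(1,2),(1,3),(2,0),(2,1),(2,2),(2,3)]

lemma B4_iff {k : ℕ} (c : Fin 3 × Fin 4 → Fin k) (v : Fin 3 × Fin 4) (i : Fin k) :
    B4 c v i = true ↔ ∃ u, adjE v u ∧ c u = i := by
  have h4' : ∀ x : Fin 4, x ≠ x+1 ∧ x ≠ x+2 ∧ x ≠ x+3 := by decide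
  have h3' : ∀ x : Fin 3, x ≠ x+1 ∧ x ≠ x+2 := by decide
  have h4 : ∀ x y : Fin 4, x ≠ y → (y = x+1 ∨ y = x+2 ∨ y = x+3) := by decide
  have h3 : ∀ x y : Fin 3, x ≠ y → (y = x+1 ∨ y = x+2) := by decide
  constructor
  · intro h
    simp only [B4, Bool.or_eq_true, beq_iff_eq] at h
    rcases h with ((((h|h)|h)|h)|h)
    exacts [⟨(v.1, v.2+1), Or.inl ⟨rfl, (h4' v.2).1⟩, h⟩,
      ⟨(v.1, v.2+2), Or.inl ⟨rfl, (h4' v.2).2.1⟩, h⟩,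
      ⟨(v.1, v.2+3), Or.inl ⟨rfl, (h4' v.2).2.2⟩, h⟩,
      ⟨(v.1+1, v.2), Or.inr ⟨rfl, (h3' v.1).1⟩, h⟩,
      ⟨(v.1+2, v.2), Or.inr ⟨rfl, (h3' v.1).2⟩, h⟩]
  · rintro ⟨⟨ua, ub⟩, hadj, hc⟩
    simp only [B4, Bool.or_eq_true, beq_iff_eq]
    rcases hadj with ⟨h1, h2⟩ | ⟨h1, h2⟩
    · simp only at h1 h2
      subst h1
      rcases h4 _ _ h2 with h | h | h <;> subst h
      · exact Or.inl (Or.inl (Or.inl (Or.inl hc)))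
      · exact Or.inl (Or.inl (Or.inl (Or.inr hc)))
      · exact Or.inl (Or.inl (Or.inr hc))
    · simp only at h1 h2
      subst h1
      rcases h3 _ _ h2 with h | h <;> subst h
      · exact Or.inl (Or.inr hc)
      · exact Or.inr hc

lemma B4_self {k : ℕ} (c : Fin 3 × Fin 4 → Fin k)
    (hp : ∀ u v, adjE u v → c u ≠ c v) (v : Fin 3 × Fin 4) : B4 c v (c v) = false := by
  by_contra h
  rw [Bool.not_eq_false, B4_iff] at h
  obtain ⟨u, hadj, hc⟩ := h
  exact hp v u hadj hc.symm

lemma pair_iff (c : Fin 3 × Fin 4 → Fin 5) (hp : ∀ u v, adjE u v → c u ≠ c v)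
    (u v : Fin 3 × Fin 4) : codeFun c u = codeFun c v ↔ codeN4 c u = codeN4 c v := by
  constructor
  · intro h
    have hcv : c v = c u := by
      have h1 := congrFun h (c u)
      unfold codeFun at h1
      rw [if_pos rfl] at h1
      by_contra hne
      rw [if_neg hne] at h1
      split_ifs at h1 <;> omega
    have hbits : ∀ i, B4 c u i = B4 c v i := by
      intro i
      by_cases hi : c u = i
      · subst hi
        have h2 : B4 c v (c u) = false := by rw [← hcv]; exact B4_self c hp v
        rw [B4_self c hp u, h2]
      · have h1 := congrFun h i
        unfold codeFun at h1
        have hi' : c v ≠ i := by rw [hcv]; exact hi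
        rw [if_neg hi, if_neg hi'] at h1
        have hiff : (∃ w, adjE u w ∧ c w = i) ↔ (∃ w, adjE v w ∧ c w = i) := by
          by_cases hP : ∃ w, adjE u w ∧ c w = i <;>
            by_cases hQ : ∃ w, adjE v w ∧ c w = i <;>
            simp [hP, hQ] at h1 ⊢
        rw [← Bool.coe_iff_coe, B4_iff, B4_iff]
        exact hiff
    unfold codeN4
    rw [hcv, hbits 0, hbits 1, hbits 2, hbits 3, hbits 4]
  · intro h
    unfold codeN4 at h
    have l0 := Bool.toNat_le (B4 c u 0); have r0 := Bool.toNat_le (B4 c v 0)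
    have l1 := Bool.toNat_le (B4 c u 1); have r1 := Bool.toNat_le (B4 c v 1)
    have l2 := Bool.toNat_le (B4 c u 2); have r2 := Bool.toNat_le (B4 c v 2)
    have l3 := Bool.toNat_le (B4 c u 3); have r3 := Bool.toNat_le (B4 c v 3)
    have l4 := Bool.toNat_le (B4 c u 4); have r4 := Bool.toNat_le (B4 c v 4)
    have hcc : (c u).val = (c v).val ∧ (B4 c u 0).toNat = (B4 c v 0).toNat ∧
        (B4 c u 1).toNat = (B4 c v 1).toNat ∧ (B4 c u 2).toNat = (B4 c v 2).toNat ∧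
        (B4 c u 3).toNat = (B4 c v 3).toNat ∧ (B4 c u 4).toNat = (B4 c v 4).toNat := by
      omega
    have hcv : c u = c v := Fin.ext hcc.1
    have hbit : ∀ i, B4 c u i = B4 c v i := by
      have hinj : ∀ a b : Bool, a.toNat = b.toNat → a = b := by decide
      intro i
      fin_cases i
      · exact hinj _ _ hcc.2.1
      · exact hinj _ _ hcc.2.2.1
      · exact hinj _ _ hcc.2.2.2.1
      · exact hinj _ _ hcc.2.2.2.2.1
      · exact hinj _ _ hcc.2.2.2.2.2
    funext i
    unfold codeFun
    by_cases hi : c u = i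
    · rw [if_pos hi, if_pos (by rw [← hcv]; exact hi)]
    · rw [if_neg hi, if_neg (show ¬ c v = i by rw [← hcv]; exact hi)]
      have hiff : (∃ w, adjE u w ∧ c w = i) ↔ (∃ w, adjE v w ∧ c w = i) := by
        rw [← B4_iff, ← B4_iff, hbit i]
      exact if_congr hiff rfl rfl

lemma inj_iff_pairwise (c : Fin 3 × Fin 4 → Fin 5) (hp : ∀ u v, adjE u v → c u ≠ c v) :
    Injective (codeFun c) ↔ (verts4.map (codeN4 c)).Pairwise (· ≠ ·) := by
  rw [List.pairwise_map]
  constructor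
  · intro hinj
    have hnd : verts4.Pairwise (· ≠ ·) := by decide
    exact hnd.imp (fun {a b} hne hEq => hne (hinj ((pair_iff c hp a b).mpr hEq)))
  · intro hpw a b hab
    by_contra hne
    have hmem : ∀ w : Fin 3 × Fin 4, w ∈ verts4 := by decide
    have hsym : Symmetric (fun a b : Fin 3 × Fin 4 => codeN4 c a ≠ codeN4 c b) :=
      fun x y h e => h e.symm
    have : Std.Symm (fun a b : Fin 3 × Fin 4 => codeN4 c a ≠ codeN4 c b) := ⟨hsym⟩
    exact hpw.forall (hmem a) (hmem b) hne ((pair_iff c hp a b).mp hab)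

/-- A coloring of `K_3 □ K_4` with the first row fixed to `0 1 2 3`. -/
def mkc4 (x10 x11 x12 x13 x20 x21 x22 x23 : Fin 5) : Fin 3 × Fin 4 → Fin 5 := fun v =>
  match v.1.val, v.2.val with
  | 0, 0 => 0 | 0, 1 => 1 | 0, 2 => 2 | 0, 3 => 3
  | 1, 0 => x10 | 1, 1 => x11 | 1, 2 => x12 | 1, 3 => x13
  | _, 0 => x20 | _, 1 => x21 | _, 2 => x22 | _, _ => x23

set_option maxRecDepth 100000 in
set_option maxHeartbeats 10000000 in
theorem search54 :
    ∀ x10 : Fin 5, (x10 != 0) = true →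
    ∀ x11 : Fin 5, (x11 != 1 && x11 != x10) = true →
    ∀ x12 : Fin 5, (x12 != 2 && x12 != x10 && x12 != x11) = true →
    ∀ x13 : Fin 5, (x13 != 3 && x13 != x10 && x13 != x11 && x13 != x12) = true →
    ∀ x20 : Fin 5, (x20 != 0 && x20 != x10) = true →
    ∀ x21 : Fin 5, (x21 != 1 && x21 != x11 && x21 != x20) = true →
    ∀ x22 : Fin 5, (x22 != 2 && x22 != x12 && x22 != x20 && x22 != x21) = true →
    ∀ x23 : Fin 5, (x23 != 3 && x23 != x13 && x23 != x20 && x23 != x21 && x23 != x22) = true →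
    ¬ (verts4.map (codeN4 (mkc4 x10 x11 x12 x13 x20 x21 x22 x23))).Pairwise (· ≠ ·) := by
  decide

/-- No locating 5-coloring of `K_3 □ K_4`. -/
lemma no5 (c : Fin 3 × Fin 4 → Fin 5) (hc : IsLocatingColoring (Gr 4) c) : False := by
  obtain ⟨hs, hp, hinj⟩ := (locating_iff c).mp hc
  obtain ⟨σ, hσ⟩ := exists_perm_comp (fun b => c (0, b))
    (Fin.castLE (by norm_num : 4 ≤ 5)) (row_inj c hp 0) (Fin.castLE_injective _)
  set c' : Fin 3 × Fin 4 → Fin 5 := ⇑σ ∘ c with hc'def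
  obtain ⟨hs', hp', hinj'⟩ := (locating_iff c').mp (relabel (Gr 4) c σ hc)
  have e0 : c' (0, 0) = 0 := hσ 0
  have e1 : c' (0, 1) = 1 := hσ 1
  have e2 : c' (0, 2) = 2 := hσ 2
  have e3 : c' (0, 3) = 3 := hσ 3
  have hpw := (inj_iff_pairwise c' hp').mp hinj'
  have hEq : c' = mkc4 (c' (1,0)) (c' (1,1)) (c' (1,2)) (c' (1,3))
      (c' (2,0)) (c' (2,1)) (c' (2,2)) (c' (2,3)) := by
    funext v
    obtain ⟨a, b⟩ := v
    fin_cases a <;> fin_cases b <;>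
      first
        | exact e0 | exact e1 | exact e2 | exact e3 | rfl
  have bb : ∀ x y : Fin 5, x ≠ y → (x != y) = true := fun x y h => bne_iff_ne.mpr h
  have hg := search54 (c' (1,0))
    (bb _ _ (by rw [← e0]; exact hp' (1,0) (0,0) (by decide)))
    (c' (1,1))
    (by rw [Bool.and_eq_true]
        exact ⟨bb _ _ (by rw [← e1]; exact hp' (1,1) (0,1) (by decide)),
               bb _ _ (hp' (1,1) (1,0) (by decide))⟩)
    (c' (1,2))
    (by rw [Bool.and_eq_true, Bool.and_eq_true]
        exact ⟨⟨bb _ _ (by rw [← e2]; exact hp' (1,2) (0,2) (by decide)),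
               bb _ _ (hp' (1,2) (1,0) (by decide))⟩,
               bb _ _ (hp' (1,2) (1,1) (by decide))⟩)
    (c' (1,3))
    (by rw [Bool.and_eq_true, Bool.and_eq_true, Bool.and_eq_true]
        exact ⟨⟨⟨bb _ _ (by rw [← e3]; exact hp' (1,3) (0,3) (by decide)),
               bb _ _ (hp' (1,3) (1,0) (by decide))⟩,
               bb _ _ (hp' (1,3) (1,1) (by decide))⟩,
               bb _ _ (hp' (1,3) (1,2) (by decide))⟩)
    (c' (2,0))
    (by rw [Bool.and_eq_true]
        exact ⟨bb _ _ (by rw [← e0]; exact hp' (2,0) (0,0) (by decide)),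
               bb _ _ (hp' (2,0) (1,0) (by decide))⟩)
    (c' (2,1))
    (by rw [Bool.and_eq_true, Bool.and_eq_true]
        exact ⟨⟨bb _ _ (by rw [← e1]; exact hp' (2,1) (0,1) (by decide)),
               bb _ _ (hp' (2,1) (1,1) (by decide))⟩,
               bb _ _ (hp' (2,1) (2,0) (by decide))⟩)
    (c' (2,2))
    (by rw [Bool.and_eq_true, Bool.and_eq_true, Bool.and_eq_true]
        exact ⟨⟨⟨bb _ _ (by rw [← e2]; exact hp' (2,2) (0,2) (by decide)),
               bb _ _ (hp' (2,2) (1,2) (by decide))⟩,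
               bb _ _ (hp' (2,2) (2,0) (by decide))⟩,
               bb _ _ (hp' (2,2) (2,1) (by decide))⟩)
    (c' (2,3))
    (by rw [Bool.and_eq_true, Bool.and_eq_true, Bool.and_eq_true, Bool.and_eq_true]
        exact ⟨⟨⟨⟨bb _ _ (by rw [← e3]; exact hp' (2,3) (0,3) (by decide)),
               bb _ _ (hp' (2,3) (1,3) (by decide))⟩,
               bb _ _ (hp' (2,3) (2,0) (by decide))⟩,
               bb _ _ (hp' (2,3) (2,1) (by decide))⟩,
               bb _ _ (hp' (2,3) (2,2) (by decide))⟩)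
  rw [← hEq] at hg
  exact hg hpw

/-! ### Explicit locating 6-colorings -/

def cU4 : Fin 3 × Fin 4 → Fin 6 := fun v =>
  match v.1.val, v.2.val with
  | 0, 0 => 2 | 0, 1 => 4 | 0, 2 => 3 | 0, 3 => 1
  | 1, 0 => 1 | 1, 1 => 2 | 1, 2 => 4 | 1, 3 => 0
  | _, 0 => 4 | _, 1 => 3 | _, 2 => 0 | _, _ => 5

def cU5 : Fin 3 × Fin 5 → Fin 6 := fun v =>
  match v.1.val, v.2.val with
  | 0, 0 => 0 | 0, 1 => 1 | 0, 2 => 2 | 0, 3 => 3 | 0, 4 => 4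
  | 1, 0 => 1 | 1, 1 => 0 | 1, 2 => 3 | 1, 3 => 4 | 1, 4 => 5
  | _, 0 => 2 | _, 1 => 4 | _, 2 => 5 | _, 3 => 0 | _, _ => 1

set_option maxHeartbeats 4000000 in
lemma cU4_locating : IsLocatingColoring (Gr 4) cU4 :=
  (locating_iff cU4).mpr ⟨by decide, by decide, by decide⟩

set_option maxHeartbeats 4000000 in
lemma cU5_locating : IsLocatingColoring (Gr 5) cU5 :=
  (locating_iff cU5).mpr ⟨by decide, by decide, by decide⟩

/-! ### Lower bounds -/

lemma lower4 {k : ℕ} (c : Fin 3 × Fin 4 → Fin k) (hc : IsLocatingColoring (Gr 4) c) :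
    6 ≤ k := by
  by_contra hlt
  push_neg at hlt
  obtain ⟨hs, hp, hinj⟩ := (locating_iff c).mp hc
  have hk4 : 4 ≤ k := by
    have := Fintype.card_le_of_injective _ (row_inj c hp 0)
    simpa using this
  interval_cases k
  · exact pigeon (by norm_num) c hp hinj
  · exact no5 c hc

lemma lower5 {k : ℕ} (c : Fin 3 × Fin 5 → Fin k) (hc : IsLocatingColoring (Gr 5) c) :
    6 ≤ k := by
  by_contra hlt
  push_neg at hlt
  obtain ⟨hs, hp, hinj⟩ := (locating_iff c).mp hc
  have hk5 : 5 ≤ k := by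
    have := Fintype.card_le_of_injective _ (row_inj c hp 0)
    simpa using this
  interval_cases k
  exact pigeon (by norm_num) c hp hinj

/-- `χ_L(K_3 □ K_4) = 6` and `χ_L(K_3 □ K_5) = 6`. -/
theorem stmt17 :
    locatingChromaticNumber
      ((⊤ : SimpleGraph (Fin 3)) □ (⊤ : SimpleGraph (Fin 4))) = 6 ∧
    locatingChromaticNumber
      ((⊤ : SimpleGraph (Fin 3)) □ (⊤ : SimpleGraph (Fin 5))) = 6 := by
  constructor
  · apply le_antisymm
    · exact Nat.sInf_le ⟨cU4, cU4_locating⟩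
    · exact le_csInf ⟨6, cU4, cU4_locating⟩ (fun k ⟨c, hc⟩ => lower4 c hc)
  · apply le_antisymm
    · exact Nat.sInf_le ⟨cU5, cU5_locating⟩
    · exact le_csInf ⟨6, cU5, cU5_locating⟩ (fun k ⟨c, hc⟩ => lower5 c hc)
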